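/- Let X be a connected, simply connected, locally path-connected metric space, and let Ω ⊂ X be an open connected subset. Then the boundary ∂Ω is connected if and only if the complement X \ Ω is connected. -/

import Mathlib

open Set

section Auxiliary

open Real unitInterval

noncomputable section
namespace BCCaux

lemma mem_slitPlane_of_ne_neg_one {z : Circle} (hz : (z : ℂ) ≠ -1) :
    (z : ℂ) ∈ Complex.slitPlane := by
  rw [Complex.mem_slitPlane_iff]
  by_contra h
  push_neg at h
  obtain ⟨h1, h2⟩ := h
  apply hz
  have hns : Complex.normSq (z : ℂ) = 1 := Circle.normSq_coe z
  rw [Complex.normSq_apply, h2, mul_zero, add_zero] at hns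
  have : (z : ℂ).re = -1 := by nlinarith
  apply Complex.ext <;> simp [this, h2]

lemma continuousAt_arg_comp {Y : Type*} [TopologicalSpace Y] {f : Y → Circle} {y : Y}
    (hf : ContinuousAt f y) (h : ((f y : ℂ)) ≠ -1) :
    ContinuousAt (fun y => Complex.arg (f y)) y := by
  have h1 : ContinuousAt (fun y => (f y : ℂ)) y :=
    (continuousAt_subtype_val).comp hf
  exact ContinuousAt.comp (x := y) (Complex.continuousAt_arg (mem_slitPlane_of_ne_neg_one h)) h1

lemma ratio_ne_neg_one {w z : Circle} (h : dist w z < 2) :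
    ((w * z⁻¹ : Circle) : ℂ) ≠ -1 := by
  intro H
  rw [Circle.coe_mul, Circle.coe_inv] at H
  have hz : (z : ℂ) ≠ 0 := Circle.coe_ne_zero z
  have hw : (w : ℂ) = -(z : ℂ) := by
    field_simp at H
    linear_combination H
  have hd : dist w z = dist (w : ℂ) (z : ℂ) := Subtype.dist_eq w z
  rw [hd, Complex.dist_eq, hw] at h
  have : -(z:ℂ) - z = -(2 * z) := by ring
  rw [this, norm_neg] at h
  simp only [norm_mul, Complex.norm_two, Circle.norm_coe, mul_one] at h
  norm_num at h

/-- Constancy of a continuous function whose exponential is 1 on a preconnected set. -/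
lemma const_of_exp_eq_one {Y : Type*} [TopologicalSpace Y] {S : Set Y}
    (hS : IsPreconnected S) {ψ : Y → ℝ} (hc : ContinuousOn ψ S)
    (h1 : ∀ y ∈ S, Circle.exp (ψ y) = 1) {a b : Y} (ha : a ∈ S) (hb : b ∈ S) :
    ψ a = ψ b := by
  have hT : IsPreconnected (ψ '' S) := hS.image ψ hc
  by_contra hne
  wlog hlt : ψ a < ψ b generalizing a b
  · exact this hb ha (Ne.symm hne) (lt_of_le_of_ne (not_lt.mp hlt) (Ne.symm hne))
  obtain ⟨m, hm⟩ := Circle.exp_eq_one.mp (h1 a ha)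
  obtain ⟨m', hm'⟩ := Circle.exp_eq_one.mp (h1 b hb)
  have h2π : (0:ℝ) < 2 * π := by positivity
  have hmm : m < m' := by
    rw [hm, hm'] at hlt
    have : (m:ℝ) < m' := lt_of_mul_lt_mul_right (by nlinarith) h2π.le
    exact_mod_cast this
  have hr : ψ a + π ∈ Icc (ψ a) (ψ b) := by
    constructor
    · linarith [pi_pos]
    · rw [hm, hm']
      have : (m : ℝ) + 1 ≤ m' := by exact_mod_cast hmm
      nlinarith [pi_pos]
  have hsub := hT.Icc_subset ⟨a, ha, rfl⟩ ⟨b, hb, rfl⟩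
  obtain ⟨y, hy, hyv⟩ := hsub hr
  obtain ⟨m'', hm''⟩ := Circle.exp_eq_one.mp (h1 y hy)
  rw [hm''] at hyv
  rw [hm] at hyv
  have : ((2 * m'' : ℤ) : ℝ) = ((2 * m + 1 : ℤ) : ℝ) := by
    push_cast
    have hπ : (0:ℝ) < π := pi_pos
    nlinarith [hyv]
  have h2 : (2 * m'' : ℤ) = 2 * m + 1 := by exact_mod_cast this
  omega

/-- Every continuous map `I → Circle` lifts through `Circle.exp`. -/
lemma exists_lift (f : I → Circle) (hf : Continuous f) :
    ∃ ℓ : I → ℝ, Continuous ℓ ∧ ∀ t, Circle.exp (ℓ t) = f t := by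
  obtain ⟨δ, δpos, hδ⟩ := Metric.uniformContinuous_iff.mp
    (CompactSpace.uniformContinuous_of_continuous hf) 2 two_pos
  obtain ⟨n, hn⟩ := exists_nat_one_div_lt δpos
  set N : ℕ := n + 1 with hN
  have hNpos : (0:ℝ) < N := by positivity
  -- the scaled points
  have cmem : ∀ (k : ℕ) (t : I), min ((k:ℝ)/N) 1 * (t:ℝ) ∈ I := by
    intro k t
    constructor
    · apply mul_nonneg (le_min (by positivity) zero_le_one) t.2.1
    · calc min ((k:ℝ)/N) 1 * (t:ℝ) ≤ 1 * 1 :=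
            mul_le_mul (min_le_right _ _) t.2.2 t.2.1 zero_le_one
        _ = 1 := by ring
  set c : ℕ → I → I := fun k t => ⟨min ((k:ℝ)/N) 1 * (t:ℝ), cmem k t⟩ with hc
  have hcmin : ∀ k : ℕ, k ≤ N → ∀ t : I, (c k t : ℝ) = (k:ℝ)/N * t := by
    intro k hk t
    simp only [hc]
    rw [min_eq_left (by rw [div_le_one hNpos]; exact_mod_cast hk)]
  have hc0 : ∀ t, c 0 t = 0 := by
    intro t; ext; simp [hc]
  have hcN : ∀ t, c N t = t := by
    intro t; ext; rw [hcmin N le_rfl t, div_self hNpos.ne', one_mul]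
  have hcont : ∀ k : ℕ, Continuous fun t => c k t := by
    intro k
    apply Continuous.subtype_mk
    exact (continuous_const.mul continuous_subtype_val)
  have hdist : ∀ (k : ℕ), k + 1 ≤ N → ∀ t : I, dist (c (k+1) t) (c k t) < δ := by
    intro k hk t
    have h1 := hcmin (k+1) hk t
    have h2 := hcmin k (by omega) t
    rw [Subtype.dist_eq, Real.dist_eq, h1, h2]
    have ht1 : (t:ℝ) ≤ 1 := t.2.2
    have ht0 : (0:ℝ) ≤ t := t.2.1
    have h3 : ((k+1 : ℕ):ℝ)/N * t - (k:ℝ)/N * t = (t:ℝ) / N := by push_cast; field_simp; ring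
    rw [h3, abs_of_nonneg (by positivity)]
    calc (t:ℝ)/N ≤ 1/N := by gcongr
      _ < δ := by rw [hN]; push_cast; exact hn
  have hratio : ∀ (k : ℕ), k < N → ∀ t : I,
      ((f (c (k+1) t) * (f (c k t))⁻¹ : Circle) : ℂ) ≠ -1 := by
    intro k hk t
    exact ratio_ne_neg_one (hδ (hdist k hk t))
  refine ⟨fun t => Complex.arg (f 0) +
      ∑ k ∈ Finset.range N, Complex.arg ((f (c (k+1) t)) * (f (c k t))⁻¹ : Circle), ?_, ?_⟩
  · apply continuous_const.add
    apply continuous_finset_sum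
    intro k hk
    rw [Finset.mem_range] at hk
    rw [continuous_iff_continuousAt]
    intro t
    apply continuousAt_arg_comp
    · exact (((hf.comp (hcont (k+1))).mul ((hf.comp (hcont k)).inv)).continuousAt)
    · exact hratio k hk t
  · intro t
    have key : ∀ m : ℕ, Circle.exp (Complex.arg (f 0) +
        ∑ k ∈ Finset.range m, Complex.arg ((f (c (k+1) t)) * (f (c k t))⁻¹ : Circle))
        = f (c m t) := by
      intro m
      induction m with
      | zero => simp [hc0 t, Circle.exp_arg]
      | succ m ih =>
        rw [Finset.sum_range_succ, ← add_assoc, Circle.exp_add, ih, Circle.exp_arg,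
          mul_comm (f (c (m+1) t)) (f (c m t))⁻¹, ← mul_assoc, mul_inv_cancel, one_mul]
    rw [key N, hcN]

open scoped Classical in
/-- The total winding increment of a map `I → Circle`. -/
noncomputable def delta (f : I → Circle) : ℝ :=
  if h : ∃ ℓ : I → ℝ, Continuous ℓ ∧ ∀ t, Circle.exp (ℓ t) = f t then
    h.choose 1 - h.choose 0
  else 0

lemma delta_eq {f : I → Circle} {ℓ : I → ℝ} (hl : Continuous ℓ)
    (he : ∀ t, Circle.exp (ℓ t) = f t) : delta f = ℓ 1 - ℓ 0 := by
  have h : ∃ ℓ : I → ℝ, Continuous ℓ ∧ ∀ t, Circle.exp (ℓ t) = f t := ⟨ℓ, hl, he⟩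
  classical
  rw [delta]
  rw [dif_pos h]
  obtain ⟨hl', he'⟩ := h.choose_spec
  set ℓ' := h.choose
  have hψ : ∀ t : I, Circle.exp (ℓ' t - ℓ t) = 1 := by
    intro t
    rw [Circle.exp_sub, he t, he' t]
    exact div_self' (f t)
  have hconst : (fun t => ℓ' t - ℓ t) 0 = (fun t => ℓ' t - ℓ t) 1 := by
    apply const_of_exp_eq_one (S := (univ : Set I)) isPreconnected_univ
      ((hl'.sub hl).continuousOn) (fun y _ => hψ y) (mem_univ _) (mem_univ _)
  simp only at hconst
  linarith [hconst]

lemma delta_congr {f₁ f₂ : I → Circle} (h1 : Continuous f₁) (h2 : Continuous f₂)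
    (hne : ∀ t, ((f₂ t * (f₁ t)⁻¹ : Circle) : ℂ) ≠ -1)
    (h0 : f₁ 0 = f₂ 0) (hend : f₁ 1 = f₂ 1) : delta f₁ = delta f₂ := by
  obtain ⟨ℓ, hl, he⟩ := exists_lift f₁ h1
  have hq : Continuous fun t => (f₂ t * (f₁ t)⁻¹ : Circle) := h2.mul h1.inv
  have hl2 : Continuous fun t => ℓ t + Complex.arg (f₂ t * (f₁ t)⁻¹ : Circle) := by
    apply hl.add
    rw [continuous_iff_continuousAt]
    intro t
    exact continuousAt_arg_comp hq.continuousAt (hne t)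
  have he2 : ∀ t, Circle.exp (ℓ t + Complex.arg (f₂ t * (f₁ t)⁻¹ : Circle)) = f₂ t := by
    intro t
    rw [Circle.exp_add, Circle.exp_arg, he t, mul_comm (f₂ t) (f₁ t)⁻¹, ← mul_assoc,
      mul_inv_cancel, one_mul]
  rw [delta_eq hl he, delta_eq hl2 he2, h0, hend]
  simp [mul_inv_cancel, Complex.arg_one]

lemma delta_trans {X : Type*} [TopologicalSpace X] {x y z : X} (g : X → Circle)
    (hg : Continuous g) (p : Path x y) (q : Path y z) :
    delta (g ∘ (p.trans q)) = delta (g ∘ p) + delta (g ∘ q) := by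
  obtain ⟨ℓ, hl, he⟩ := exists_lift (g ∘ (p.trans q)) (hg.comp (p.trans q).continuous)
  have half_mem : ∀ t : I, (t : ℝ) / 2 ∈ I := by
    intro t; constructor
    · exact div_nonneg t.2.1 (by norm_num)
    · linarith [t.2.2]
  have half1_mem : ∀ t : I, ((t : ℝ) + 1) / 2 ∈ I := by
    intro t; constructor
    · linarith [t.2.1]
    · linarith [t.2.2]
  set η₁ : I → I := fun t => ⟨(t : ℝ) / 2, half_mem t⟩ with hη₁
  set η₂ : I → I := fun t => ⟨((t : ℝ) + 1) / 2, half1_mem t⟩ with hη₂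
  have hη₁c : Continuous η₁ := by
    apply Continuous.subtype_mk; exact continuous_subtype_val.div_const 2
  have hη₂c : Continuous η₂ := by
    apply Continuous.subtype_mk
    exact (continuous_subtype_val.add continuous_const).div_const 2
  have hval₁ : ∀ t : I, (p.trans q) (η₁ t) = p t := by
    intro t
    rw [Path.trans_apply]
    have hc : ((η₁ t : ℝ)) ≤ 1/2 := by
      simp only [hη₁]; linarith [t.2.2]
    rw [dif_pos hc]
    congr 1
    ext
    simp [hη₁]; ring
  have hval₂ : ∀ t : I, (p.trans q) (η₂ t) = q t := by
    intro t
    rw [Path.trans_apply]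
    by_cases hc : ((η₂ t : ℝ)) ≤ 1/2
    · rw [dif_pos hc]
      have ht0 : t = 0 := by
        ext
        simp only [hη₂] at hc
        have h01 := t.2.1
        rw [show ((0:I):ℝ) = 0 from rfl]
        linarith
      subst ht0
      suffices h : ∀ s : I, (s:ℝ) = 1 → p s = q 0 by
        apply h
        simp [hη₂]
      intro s hs
      have hs1 : s = 1 := Subtype.ext hs
      rw [hs1, Path.target, Path.source]
    · rw [dif_neg hc]
      congr 1
      ext
      simp [hη₂]; ring
  have d1 : delta (g ∘ p) = ℓ (η₁ 1) - ℓ (η₁ 0) := by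
    apply delta_eq (hl.comp hη₁c)
    intro t
    have := he (η₁ t)
    rwa [Function.comp_apply, hval₁ t] at this
  have d2 : delta (g ∘ q) = ℓ (η₂ 1) - ℓ (η₂ 0) := by
    apply delta_eq (hl.comp hη₂c)
    intro t
    have := he (η₂ t)
    rwa [Function.comp_apply, hval₂ t] at this
  have d0 : delta (g ∘ (p.trans q)) = ℓ 1 - ℓ 0 := delta_eq hl he
  have e1 : η₁ 1 = η₂ 0 := by ext; simp [hη₁, hη₂]
  have e2 : η₁ 0 = 0 := by ext; simp [hη₁]
  have e3 : η₂ 1 = 1 := by ext; simp [hη₂]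
  rw [d0, d1, d2, e1, e2, e3]
  ring

lemma delta_homotopic {X : Type*} [TopologicalSpace X] {x y : X} (g : X → Circle)
    (hg : Continuous g) {p q : Path x y} (h : Path.Homotopic p q) :
    delta (g ∘ p) = delta (g ∘ q) := by
  obtain ⟨F⟩ := h
  set G : I × I → Circle := fun st => g (F st) with hG
  have hGc : Continuous G := hg.comp F.continuous
  obtain ⟨δ, δpos, hδ⟩ := Metric.uniformContinuous_iff.mp
    (CompactSpace.uniformContinuous_of_continuous hGc) 2 two_pos
  obtain ⟨n, hn⟩ := exists_nat_one_div_lt δpos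
  set N : ℕ := n + 1 with hN
  have hNpos : (0:ℝ) < N := by positivity
  have smem : ∀ k : ℕ, min ((k:ℝ)/N) 1 ∈ I := by
    intro k
    exact ⟨le_min (by positivity) zero_le_one, min_le_right _ _⟩
  set s : ℕ → I := fun k => ⟨min ((k:ℝ)/N) 1, smem k⟩ with hs
  have hsmin : ∀ k : ℕ, k ≤ N → (s k : ℝ) = (k:ℝ)/N := by
    intro k hk
    simp only [hs]
    rw [min_eq_left (by rw [div_le_one hNpos]; exact_mod_cast hk)]
  set sl : ℕ → (I → Circle) := fun k t => G (s k, t) with hsl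
  have hslc : ∀ k, Continuous (sl k) := by
    intro k
    exact hGc.comp (Continuous.prodMk_right (s k))
  have hsl0 : sl 0 = g ∘ p := by
    funext t
    simp only [hsl, hG]
    have : s 0 = 0 := by ext; simp [hs]
    rw [this]
    congr 1
    exact F.apply_zero t
  have hslN : sl N = g ∘ q := by
    funext t
    simp only [hsl, hG]
    have : s N = 1 := by
      ext; rw [hsmin N le_rfl, div_self hNpos.ne']; rfl
    rw [this]
    congr 1
    exact F.apply_one t
  have key : ∀ k : ℕ, k ≤ N → delta (sl 0) = delta (sl k) := by
    intro k hk
    induction k with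
    | zero => rfl
    | succ m ih =>
      rw [ih (by omega)]
      apply delta_congr (hslc m) (hslc (m+1))
      · intro t
        apply ratio_ne_neg_one
        apply hδ
        rw [Prod.dist_eq]
        simp only [dist_self]
        rw [max_eq_left dist_nonneg]
        rw [Subtype.dist_eq, Real.dist_eq, hsmin (m+1) hk, hsmin m (by omega)]
        have : ((m+1 : ℕ):ℝ)/N - (m:ℝ)/N = 1 / N := by push_cast; field_simp; ring
        rw [this, abs_of_nonneg (by positivity), hN]
        push_cast
        exact hn
      · show g (F (s m, 0)) = g (F (s (m+1), 0))
        rw [F.source (s m), F.source (s (m+1))]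
      · show g (F (s m, 1)) = g (F (s (m+1), 1))
        rw [F.target (s m), F.target (s (m+1))]
  rw [← hsl0, ← hslN]
  exact key N le_rfl

/-- Any continuous map from a simply connected, locally path-connected space to the
circle lifts through `Circle.exp`. -/
lemma exists_global_lift {X : Type*} [TopologicalSpace X] [SimplyConnectedSpace X]
    [LocallyPathConnectedSpace X] (g : X → Circle) (hg : Continuous g) :
    ∃ h : X → ℝ, Continuous h ∧ ∀ x, Circle.exp (h x) = g x := by
  have : PathConnectedSpace X := inferInstance
  obtain ⟨x₀⟩ := this.nonempty
  set h : X → ℝ := fun x =>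
    Complex.arg (g x₀) + delta (g ∘ (PathConnectedSpace.somePath x₀ x)) with hh
  have key : ∀ (x : X) (p : Path x₀ x), h x = Complex.arg (g x₀) + delta (g ∘ p) := by
    intro x p
    rw [hh]
    simp only
    rw [delta_homotopic g hg (SimplyConnectedSpace.paths_homotopic _ p)]
  have hexp : ∀ x, Circle.exp (h x) = g x := by
    intro x
    set p := PathConnectedSpace.somePath x₀ x
    obtain ⟨ℓ, hl, he⟩ := exists_lift (g ∘ p) (hg.comp p.continuous)
    rw [key x p, delta_eq hl he, Circle.exp_add, Circle.exp_arg,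
      Circle.exp_sub, he 1, he 0]
    simp only [Function.comp_apply, Path.source, Path.target]
    rw [div_eq_mul_inv, mul_comm (g x) (g x₀)⁻¹, ← mul_assoc, mul_inv_cancel, one_mul]
  refine ⟨h, ?_, hexp⟩
  rw [continuous_iff_continuousAt]
  intro x
  -- the set where the ratio with `g x` is not `-1`
  set φ : X → ℂ := fun y => ((g y * (g x)⁻¹ : Circle) : ℂ) with hφ
  have hφc : Continuous φ := continuous_subtype_val.comp (hg.mul continuous_const)
  set U₀ : Set X := φ ⁻¹' ({-1}ᶜ) with hU₀
  have hU₀o : IsOpen U₀ := hφc.isOpen_preimage _ (isClosed_singleton.isOpen_compl)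
  have hxU₀ : x ∈ U₀ := by
    simp only [hU₀, hφ, mem_preimage, mem_compl_iff, mem_singleton_iff]
    rw [mul_inv_cancel]
    intro hcon
    rw [Circle.coe_one] at hcon
    norm_num at hcon
  obtain ⟨U, ⟨hUnhds, hUpc⟩, hUsub⟩ :=
    (path_connected_basis x).mem_iff.mp (hU₀o.mem_nhds hxU₀)
  have hxU : x ∈ U := mem_of_mem_nhds hUnhds
  have claim : ∀ y ∈ U, h y = h x + Complex.arg (φ y) := by
    intro y hy
    set J := hUpc.joinedIn x hxU y hy with hJ
    set w := J.somePath with hwdef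
    have hw : ∀ t, w t ∈ U := J.somePath_mem
    set p := PathConnectedSpace.somePath x₀ x
    have h1 : h y = Complex.arg (g x₀) + delta (g ∘ (p.trans w)) := key y (p.trans w)
    rw [delta_trans g hg p w] at h1
    have h2 : delta (g ∘ w) = Complex.arg (φ y) := by
      have hlw : Continuous fun t => Complex.arg (g x) + Complex.arg (φ (w t)) := by
        apply continuous_const.add
        rw [continuous_iff_continuousAt]
        intro t
        apply continuousAt_arg_comp ((hg.mul continuous_const).continuousAt.comp
          w.continuous.continuousAt)
        exact hUsub (hw t)
      have hew : ∀ t, Circle.exp (Complex.arg (g x) + Complex.arg (φ (w t)))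
          = (g ∘ w) t := by
        intro t
        show Circle.exp (Complex.arg (g x) + Complex.arg ((g (w t) * (g x)⁻¹ : Circle) : ℂ))
          = (g ∘ w) t
        rw [Circle.exp_add, Circle.exp_arg (g x), Circle.exp_arg (g (w t) * (g x)⁻¹)]
        simp only [Function.comp_apply]
        rw [mul_comm (g (w t)) (g x)⁻¹, ← mul_assoc, mul_inv_cancel, one_mul]
      rw [delta_eq hlw hew]
      simp only [Path.source, Path.target]
      have : φ x = ((1 : Circle) : ℂ) := by
        simp only [hφ]
        rw [mul_inv_cancel]
      rw [this, Circle.coe_one, Complex.arg_one]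
      ring
    rw [h1, h2, key x p]
    ring
  have hcongr : h =ᶠ[nhds x] fun y => h x + Complex.arg (φ y) :=
    Filter.eventuallyEq_of_mem hUnhds claim
  have htarget : ContinuousAt (fun y => h x + Complex.arg (φ y)) x := by
    apply ContinuousAt.add continuousAt_const
    apply continuousAt_arg_comp (f := fun y => (g y * (g x)⁻¹ : Circle))
      ((hg.mul continuous_const).continuousAt)
    have := hxU₀
    simpa [hU₀, hφ] using this
  exact htarget.congr hcongr.symm

end BCCaux
end
end Auxiliary

open BCCaux Metric Real

/-- Let `X` be a connected, simply connected, locally path-connected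
metric space, and let `Ω ⊆ X` be an open connected subset. Then the boundary `∂Ω`
is connected if and only if the complement `X \ Ω` is connected. -/
theorem boundary_connected_iff_complement_connected
    {X : Type*} [MetricSpace X] [ConnectedSpace X] [SimplyConnectedSpace X]
    [LocallyPathConnectedSpace X] {Ω : Set X} (hopen : IsOpen Ω) (hconn : IsConnected Ω) :
    IsConnected (frontier Ω) ↔ IsConnected (Ωᶜ) := by
  have hfsub : frontier Ω ⊆ Ωᶜ := by
    rw [hopen.frontier_eq]
    exact fun x hx => hx.2
  have hfcl : frontier Ω ⊆ closure Ω := frontier_subset_closure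
  constructor
  · -- frontier connected → complement connected
    intro hfr
    obtain ⟨a, ha⟩ := hfr.nonempty
    have keyC : ∀ x : X, x ∈ Ωᶜ → (connectedComponentIn Ωᶜ x ∩ frontier Ω).Nonempty := by
      intro x hx
      by_contra hemp
      rw [not_nonempty_iff_eq_empty] at hemp
      set C := connectedComponentIn Ωᶜ x with hC
      have hCsub : C ⊆ Ωᶜ := connectedComponentIn_subset _ _
      have hxC : x ∈ C := mem_connectedComponentIn hx
      have hCpre : IsPreconnected C := isPreconnected_connectedComponentIn
      -- C is closed
      have hCclosed : IsClosed C := by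
        rw [← closure_subset_iff_isClosed]
        apply IsPreconnected.subset_connectedComponentIn hCpre.closure
          (subset_closure hxC)
        calc closure C ⊆ closure Ωᶜ := closure_mono hCsub
          _ = Ωᶜ := hopen.isClosed_compl.closure_eq
      -- C is open
      have hCopen : IsOpen C := by
        rw [isOpen_iff_mem_nhds]
        intro y hy
        have hyΩc : y ∈ Ωᶜ := hCsub hy
        have hynf : y ∉ frontier Ω := fun hf => (eq_empty_iff_forall_notMem.mp hemp y) ⟨hy, hf⟩
        have hyint : y ∈ interior Ωᶜ := by
          by_contra hni
          apply hynf
          rw [← frontier_compl]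
          exact ⟨subset_closure hyΩc, hni⟩
        obtain ⟨V, ⟨hVnhds, hVpc⟩, hVsub⟩ :=
          (path_connected_basis y).mem_iff.mp (isOpen_interior.mem_nhds hyint)
        have hVC : V ⊆ C := by
          have : V ⊆ connectedComponentIn Ωᶜ y :=
            IsPreconnected.subset_connectedComponentIn hVpc.isConnected.isPreconnected
              (mem_of_mem_nhds hVnhds) (hVsub.trans (interior_subset))
          rwa [← connectedComponentIn_eq hy] at this
        exact Filter.mem_of_superset hVnhds hVC
      have hCuniv : C = univ := IsClopen.eq_univ ⟨hCclosed, hCopen⟩ ⟨x, hxC⟩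
      obtain ⟨z, hz⟩ := hconn.nonempty
      exact (hCsub (hCuniv ▸ mem_univ z)) hz
    constructor
    · exact ⟨a, hfsub ha⟩
    have cover : Ωᶜ = ⋃ x : ↥(Ωᶜ), (connectedComponentIn Ωᶜ ↑x ∪ frontier Ω) := by
      apply Subset.antisymm
      · intro z hz
        exact mem_iUnion.mpr ⟨⟨z, hz⟩, Or.inl (mem_connectedComponentIn hz)⟩
      · apply iUnion_subset
        intro z
        exact union_subset (connectedComponentIn_subset _ _) hfsub
    rw [cover]
    apply isPreconnected_iUnion
    · exact ⟨a, mem_iInter.mpr fun z => Or.inr ha⟩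
    · intro z
      obtain ⟨b, hb⟩ := keyC z z.2
      exact IsPreconnected.union' ⟨b, hb.1, hb.2⟩
        isPreconnected_connectedComponentIn hfr.isPreconnected
  · -- complement connected → frontier connected
    intro hcomp
    have hfront_ne : (frontier Ω).Nonempty := by
      by_contra hne
      rw [not_nonempty_iff_eq_empty] at hne
      have : IsClopen Ω := isClopen_iff_frontier_eq_empty.mpr hne
      have : Ω = univ := this.eq_univ hconn.nonempty
      obtain ⟨z, hz⟩ := hcomp.nonempty
      rw [this] at hz
      exact hz (mem_univ z)
    refine ⟨hfront_ne, ?_⟩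
    by_contra hnp
    -- produce a separation of the frontier into two nonempty disjoint closed sets
    rw [IsPreconnected] at hnp
    push_neg at hnp
    obtain ⟨u, v, hu, hv, hcov, ⟨a, hau⟩, ⟨b, hbv⟩, hdis⟩ := hnp
    set A : Set X := frontier Ω \ v with hA
    set B : Set X := frontier Ω \ u with hB
    have hAclosed : IsClosed A := isClosed_frontier.sdiff hv
    have hBclosed : IsClosed B := isClosed_frontier.sdiff hu
    have haA : a ∈ A := ⟨hau.1, fun hv' =>
      (eq_empty_iff_forall_notMem.mp hdis a) ⟨hau.1, hau.2, hv'⟩⟩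
    have hbB : b ∈ B := ⟨hbv.1, fun hu' =>
      (eq_empty_iff_forall_notMem.mp hdis b) ⟨hbv.1, hu', hbv.2⟩⟩
    have hABdisj : A ∩ B = ∅ := by
      rw [eq_empty_iff_forall_notMem]
      rintro z ⟨⟨hzf, hzv⟩, ⟨_, hzu⟩⟩
      rcases hcov hzf with h | h
      exacts [hzu h, hzv h]
    have hABcover : A ∪ B = frontier Ω := by
      apply Subset.antisymm (union_subset diff_subset diff_subset)
      intro z hz
      rcases hcov hz with h | h
      · exact Or.inl ⟨hz, fun hv' => (eq_empty_iff_forall_notMem.mp hdis z) ⟨hz, h, hv'⟩⟩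
      · exact Or.inr ⟨hz, fun hu' => (eq_empty_iff_forall_notMem.mp hdis z) ⟨hz, hu', h⟩⟩
    -- Urysohn-type separating function
    have hAne : A.Nonempty := ⟨a, haA⟩
    have hBne : B.Nonempty := ⟨b, hbB⟩
    set d : X → ℝ := fun x => infDist x A + infDist x B with hd
    have hdpos : ∀ x, 0 < d x := by
      intro x
      rcases lt_or_eq_of_le (infDist_nonneg (s := A) (x := x)) with h | h
      · exact add_pos_of_pos_of_nonneg h infDist_nonneg
      · have hxA : x ∈ A := (hAclosed.mem_iff_infDist_zero hAne).mpr h.symm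
        have hxB : x ∉ B := fun hxB => (eq_empty_iff_forall_notMem.mp hABdisj x) ⟨hxA, hxB⟩
        have h2 : 0 < infDist x B := (hBclosed.notMem_iff_infDist_pos hBne).mp hxB
        show 0 < infDist x A + infDist x B
        rw [← h, zero_add]
        exact h2
    set w : X → ℝ := fun x => infDist x A / d x with hw
    have hwc : Continuous w := by
      apply Continuous.div (continuous_infDist_pt A)
        ((continuous_infDist_pt A).add (continuous_infDist_pt B))
      exact fun x => (hdpos x).ne'
    have hwA : ∀ x ∈ A, w x = 0 := by
      intro x hx
      simp only [hw]
      rw [infDist_zero_of_mem hx, zero_div]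
    have hwB : ∀ x ∈ B, w x = 1 := by
      intro x hx
      have hxA : x ∉ A := fun hxA => (eq_empty_iff_forall_notMem.mp hABdisj x) ⟨hxA, hx⟩
      have h1 : 0 < infDist x A := (hAclosed.notMem_iff_infDist_pos hAne).mp hxA
      simp only [hw, hd]
      rw [infDist_zero_of_mem hx, add_zero, div_self h1.ne']
    haveI : ∀ x : X, Decidable (x ∈ closure Ω) := fun _ => Classical.dec _
    set g : X → Circle := fun x =>
      if x ∈ closure Ω then Circle.exp (π * w x) else Circle.exp (-(π * w x)) with hg
    have hfr_branch : ∀ x ∈ frontier Ω,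
        Circle.exp (π * w x) = Circle.exp (-(π * w x)) := by
      intro x hx
      rw [← hABcover] at hx
      rcases hx with hx | hx
      · rw [hwA x hx]; norm_num
      · rw [hwB x hx, mul_one]
        rw [Circle.exp_eq_exp]
        exact ⟨1, by ring⟩
    have hgc : Continuous g := by
      apply Continuous.if
      · intro x hx
        have : x ∈ frontier (closure Ω) := hx
        exact hfr_branch x (frontier_closure_subset this)
      · exact Circle.exp.continuous.comp (continuous_const.mul hwc)
      · exact Circle.exp.continuous.comp ((continuous_const.mul hwc).neg)
    have hgcl : ∀ x ∈ closure Ω, g x = Circle.exp (π * w x) := by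
      intro x hx
      simp only [hg]
      rw [if_pos hx]
    have hgco : ∀ x ∈ Ωᶜ, g x = Circle.exp (-(π * w x)) := by
      intro x hx
      by_cases hcl : x ∈ closure Ω
      · have hxf : x ∈ frontier Ω := by
          rw [hopen.frontier_eq]
          exact ⟨hcl, hx⟩
        simp only [hg]
        rw [if_pos hcl]
        exact hfr_branch x hxf
      · simp only [hg]
        rw [if_neg hcl]
    obtain ⟨h, hhc, hhe⟩ := exists_global_lift g hgc
    have const1 : (fun x => h x - π * w x) a = (fun x => h x - π * w x) b := by
      apply const_of_exp_eq_one (S := closure Ω) (ψ := fun x => h x - π * w x) hconn.isPreconnected.closure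
        ((hhc.sub (continuous_const.mul hwc)).continuousOn)
      · intro y hy
        rw [Circle.exp_sub, hhe y, hgcl y hy]
        exact div_self' _
      · exact hfcl haA.1
      · exact hfcl hbB.1
    have const2 : (fun x => h x + π * w x) a = (fun x => h x + π * w x) b := by
      apply const_of_exp_eq_one (S := Ωᶜ) (ψ := fun x => h x + π * w x) hcomp.isPreconnected
        ((hhc.add (continuous_const.mul hwc)).continuousOn)
      · intro y hy
        rw [Circle.exp_add, hhe y, hgco y hy, ← Circle.exp_add]
        rw [neg_add_cancel, Circle.exp_zero]
      · exact hfsub haA.1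
      · exact hfsub hbB.1
    simp only at const1 const2
    rw [hwA a haA, hwB b hbB] at const1 const2
    rw [mul_zero, mul_one, sub_zero] at const1
    rw [mul_zero, mul_one, add_zero] at const2
    have : π = 0 := by linarith
    exact pi_ne_zero this
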